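/- Define χ : Z4 + uZ4 → ℂ by χ(a + ub) = i^{ā + b̄}, where ā, b̄ ∈ {0,1,2,3} are the canonical representatives of a, b ∈ Z/4Z and i is the imaginary unit. Then χ is a well-defined additive character (χ(x + y) = χ(x)χ(y) for all x, y, and χ takes values in the unit circle), and χ is a generating character: its kernel {x : χ(x) = 1} contains no nonzero ideal of Z4 + uZ4, i.e., for every nonzero ideal I there exists x ∈ I with χ(x) ≠ 1. Consequently Z4 + uZ4 is a Frobenius ring. -/

import Mathlib

/-- The character `χ : Z₄ + uZ₄ → ℂ`, `a + ub ↦ i^{ā + b̄}`, where `ā, b̄ ∈ {0,1,2,3}`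
are canonical representatives. -/
noncomputable def chi4 (x : DualNumber (ZMod 4)) : ℂ :=
  Complex.I ^ (x.fst.val + x.snd.val)

lemma Ipow_mod (n : ℕ) : Complex.I ^ n = Complex.I ^ (n % 4) := by
  conv_lhs => rw [← Nat.div_add_mod n 4]
  rw [pow_add, pow_mul, Complex.I_pow_four, one_pow, one_mul]

instance : Fintype (DualNumber (ZMod 4)) := inferInstanceAs (Fintype (ZMod 4 × ZMod 4))
instance : DecidableEq (DualNumber (ZMod 4)) :=
  inferInstanceAs (DecidableEq (ZMod 4 × ZMod 4))

lemma chi4_ne_one {y : DualNumber (ZMod 4)} (h : (y.fst.val + y.snd.val) % 4 ≠ 0) :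
    chi4 y ≠ 1 := by
  unfold chi4
  rw [Ipow_mod]
  set m := (y.fst.val + y.snd.val) % 4 with hm
  have hlt : m < 4 := Nat.mod_lt _ (by norm_num)
  interval_cases m
  · exact absurd rfl h
  · simp [Complex.ext_iff]
  · norm_num [pow_two, Complex.I_mul_I]
  · rw [pow_succ, pow_two, Complex.I_mul_I]
    simp [Complex.ext_iff]

lemma key : ∀ x : DualNumber (ZMod 4), x ≠ 0 →
    ∃ r : DualNumber (ZMod 4), ((r * x).fst.val + (r * x).snd.val) % 4 ≠ 0 := by decide

/-- `χ(a + ub) = i^{ā + b̄}` is an additive character of `Z₄ + uZ₄` with values on the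
unit circle, and it is a generating character: every nonzero ideal contains an element
`x` with `χ(x) ≠ 1`.  Consequently `Z₄ + uZ₄` is a Frobenius ring. -/
theorem chi4_generating_character :
    (∀ x y : DualNumber (ZMod 4), chi4 (x + y) = chi4 x * chi4 y) ∧
      (∀ x : DualNumber (ZMod 4), ‖chi4 x‖ = 1) ∧
      (∀ I : Ideal (DualNumber (ZMod 4)), I ≠ ⊥ → ∃ x ∈ I, chi4 x ≠ 1) := by
  refine ⟨?_, ?_, ?_⟩
  · intro x y
    unfold chi4
    rw [← pow_add, Ipow_mod, Ipow_mod (x.fst.val + x.snd.val + (y.fst.val + y.snd.val))]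
    congr 1
    have h1 : (x + y).fst = x.fst + y.fst := rfl
    have h2 : (x + y).snd = x.snd + y.snd := rfl
    rw [h1, h2]
    have := ZMod.val_add x.fst y.fst
    have := ZMod.val_add x.snd y.snd
    omega
  · intro x
    unfold chi4
    rw [norm_pow, Complex.norm_I, one_pow]
  · intro I hI
    obtain ⟨x, hxI, hx0⟩ := Submodule.exists_mem_ne_zero_of_ne_bot hI
    obtain ⟨r, hr⟩ := key x hx0
    exact ⟨r * x, Ideal.mul_mem_left I r hxI, chi4_ne_one hr⟩
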